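/- Let A be an n×m real matrix, p ∈ [1,∞), and suppose A = Uτ where U is an (α,β,p)-well-conditioned basis for the column space of A and τ is a d×m matrix. Let r > 0 and let i be an index with p_i ∈ (0,1) satisfying p_i ≥ r·‖U_{(i)}‖_p^p / |||U|||_p^p. Then for every x ∈ ℝ^m: |A_{(i)}x|^p / p_i ≤ (αβ)^p ‖Ax‖_p^p / r. -/

import Mathlib

open scoped BigOperators

/-- The entrywise `p`-norm of a vector: `(∑ i, |v i| ^ p) ^ (1/p)`. -/
noncomputable def pnorm (p : ℝ) {n : ℕ} (v : Fin n → ℝ) : ℝ :=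
  (∑ i, |v i| ^ p) ^ (1 / p)

/-- The dual norm of the `p`-norm: the max-norm if `p = 1`, else the `p/(p-1)`-norm. -/
noncomputable def qnorm (p : ℝ) {n : ℕ} (v : Fin n → ℝ) : ℝ :=
  if p = 1 then ⨆ i, |v i| else pnorm (p / (p - 1)) v

/-- The entrywise `p`-norm of a matrix. -/
noncomputable def mpnorm (p : ℝ) {n d : ℕ} (M : Matrix (Fin n) (Fin d) ℝ) : ℝ :=
  (∑ i, ∑ j, |M i j| ^ p) ^ (1 / p)

/-- `U` is an `(α, β, p)`-well-conditioned basis for the column space of `A`. -/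
def IsWCB (p α β : ℝ) {n m d : ℕ} (A : Matrix (Fin n) (Fin m) ℝ)
    (U : Matrix (Fin n) (Fin d) ℝ) : Prop :=
  LinearMap.range U.mulVecLin = LinearMap.range A.mulVecLin ∧
  mpnorm p U ≤ α ∧
  ∀ z : Fin d → ℝ, qnorm p z ≤ β * pnorm p (U.mulVec z)

/-- `S : Ω → Matrix` is a random `n × n` diagonal sampling matrix with probabilities `pr`:
its diagonal entries are mutually independent, with `S ω i i = (pr i) ^ (-1/p)` with
probability `pr i` and `S ω i i = 0` with probability `1 - pr i`. -/
structure IsSamplingMatrix {Ω : Type} [MeasurableSpace Ω] (μ : MeasureTheory.Measure Ω)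
    (p : ℝ) {n : ℕ} (pr : Fin n → ℝ) (S : Ω → Matrix (Fin n) (Fin n) ℝ) : Prop where
  offdiag : ∀ ω i j, i ≠ j → S ω i j = 0
  meas : ∀ i, Measurable fun ω => S ω i i
  prob_val : ∀ i, μ {ω | S ω i i = (pr i) ^ (-(1 / p))} = ENNReal.ofReal (pr i)
  prob_zero : ∀ i, μ {ω | S ω i i = 0} = ENNReal.ofReal (1 - pr i)
  indep : ProbabilityTheory.iIndepFun (fun i ω => S ω i i) μ

lemma pnorm_nonneg (p : ℝ) {n : ℕ} (v : Fin n → ℝ) : 0 ≤ pnorm p v :=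
  Real.rpow_nonneg (Finset.sum_nonneg fun i _ => Real.rpow_nonneg (abs_nonneg _) _) _

lemma qnorm_nonneg (p : ℝ) {n : ℕ} (v : Fin n → ℝ) : 0 ≤ qnorm p v := by
  unfold qnorm
  split
  · exact Real.iSup_nonneg fun i => abs_nonneg _
  · exact pnorm_nonneg _ _

/-- Hölder: `|⟨v, z⟩| ≤ ‖v‖_p ‖z‖_q`. -/
lemma abs_dot_le (p : ℝ) (hp : 1 ≤ p) {n : ℕ} (v z : Fin n → ℝ) :
    |∑ j, v j * z j| ≤ pnorm p v * qnorm p z := by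
  rcases eq_or_lt_of_le hp with h1 | h1
  · -- p = 1
    subst h1
    simp only [qnorm, if_pos rfl, pnorm]
    have hb : BddAbove (Set.range fun j => |z j|) := Set.Finite.bddAbove (Set.finite_range _)
    have hsup : ∀ j, |z j| ≤ ⨆ i, |z i| := fun j => le_ciSup hb j
    have hsupnn : 0 ≤ ⨆ i, |z i| := Real.iSup_nonneg fun i => abs_nonneg _
    calc |∑ j, v j * z j| ≤ ∑ j, |v j * z j| := Finset.abs_sum_le_sum_abs _ _
      _ ≤ ∑ j, |v j| * (⨆ i, |z i|) := by
          refine Finset.sum_le_sum fun j _ => ?_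
          rw [abs_mul]
          exact mul_le_mul_of_nonneg_left (hsup j) (abs_nonneg _)
      _ = (∑ j, |v j|) * (⨆ i, |z i|) := by rw [Finset.sum_mul]
      _ ≤ (∑ j, |v j| ^ (1:ℝ)) ^ (1/(1:ℝ)) * (⨆ i, |z i|) := by
          simp [Real.rpow_one]
  · -- p > 1
    have hpq : Real.HolderConjugate p (p / (p - 1)) := Real.HolderConjugate.conjExponent h1
    have hq1 : 1 / (p / (p - 1)) = 1 / p.conjExponent := rfl
    simp only [qnorm, if_neg h1.ne', pnorm]
    have h := Real.inner_le_Lp_mul_Lq (Finset.univ) v z hpq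
    have h' := Real.inner_le_Lp_mul_Lq (Finset.univ) (fun j => -v j) z hpq
    simp only [neg_mul, Finset.sum_neg_distrib, abs_neg] at h'
    rw [abs_le]
    constructor
    · linarith
    · exact h

lemma pnorm_eq_zero_row {p : ℝ} (hp : 1 ≤ p) {n : ℕ} {v : Fin n → ℝ}
    (h : pnorm p v = 0) : ∀ j, v j = 0 := by
  have hp0 : p ≠ 0 := by linarith
  have hsum : (∑ i, |v i| ^ p) = 0 := by
    have hnn : 0 ≤ ∑ i, |v i| ^ p :=
      Finset.sum_nonneg fun i _ => Real.rpow_nonneg (abs_nonneg _) _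
    by_contra hne
    have : (∑ i, |v i| ^ p) ^ (1/p) ≠ 0 := by
      intro hz
      exact hne ((Real.rpow_eq_zero hnn (by simp [hp0])).mp hz)
    exact this h
  intro j
  have := (Finset.sum_eq_zero_iff_of_nonneg
    (fun i _ => Real.rpow_nonneg (abs_nonneg _) p)).mp hsum j (Finset.mem_univ j)
  have := (Real.rpow_eq_zero (abs_nonneg _) hp0).mp this
  simpa using this

/-- **Variance bound from well-conditioning (Equation (12)).**
Suppose `A = U * τ`, where `U` is an `(α, β, p)`-well-conditioned basis for the column space
of the `n × m` matrix `A` and `τ` is `d × m`.  If `p_i ∈ (0, 1)` satisfies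
`p_i ≥ r ‖U_(i)‖_p^p / |||U|||_p^p` for some `r > 0`, then for every `x ∈ ℝᵐ`,
`|A_(i) x|^p / p_i ≤ (αβ)^p ‖A x‖_p^p / r`. -/
theorem row_variance_bound {n m d : ℕ} (A : Matrix (Fin n) (Fin m) ℝ)
    (U : Matrix (Fin n) (Fin d) ℝ) (τ : Matrix (Fin d) (Fin m) ℝ)
    (p α β r : ℝ) (i : Fin n) (pi : ℝ)
    (hp : 1 ≤ p) (hA : A = U * τ) (hU : IsWCB p α β A U)
    (hr : 0 < r) (hpi0 : 0 < pi) (hpi1 : pi < 1)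
    (hpi : r * pnorm p (U i) ^ p / mpnorm p U ^ p ≤ pi) :
    ∀ x : Fin m → ℝ,
      |A.mulVec x i| ^ p / pi ≤ (α * β) ^ p * pnorm p (A.mulVec x) ^ p / r := by
  intro x
  have hp0 : (0:ℝ) < p := lt_of_lt_of_le one_pos hp
  obtain ⟨-, hα, hβ⟩ := hU
  have hmnn : 0 ≤ mpnorm p U :=
    Real.rpow_nonneg (Finset.sum_nonneg fun i _ => Finset.sum_nonneg fun j _ =>
      Real.rpow_nonneg (abs_nonneg _) _) _
  have hαnn : 0 ≤ α := le_trans hmnn hα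
  set z := τ.mulVec x with hz
  have hAx : A.mulVec x = U.mulVec z := by
    rw [hA, ← Matrix.mulVec_mulVec]
  set N := pnorm p (A.mulVec x) with hN
  have hNnn : 0 ≤ N := pnorm_nonneg _ _
  have hqz : qnorm p z ≤ β * N := by rw [hN, hAx]; exact hβ z
  have hβN : 0 ≤ β * N := le_trans (qnorm_nonneg p z) hqz
  -- key pointwise bound
  have hrow : |A.mulVec x i| ≤ pnorm p (U i) * (β * N) := by
    have : A.mulVec x i = ∑ j, U i j * z j := by
      rw [hAx]; rfl
    rw [this]
    calc |∑ j, U i j * z j| ≤ pnorm p (U i) * qnorm p z := abs_dot_le p hp _ _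
      _ ≤ pnorm p (U i) * (β * N) :=
          mul_le_mul_of_nonneg_left hqz (pnorm_nonneg _ _)
  by_cases hN0 : N = 0
  · -- Ax = 0
    have hAx0 : A.mulVec x i = 0 := pnorm_eq_zero_row hp hN0 i
    rw [hAx0, hN0]
    simp [Real.zero_rpow (ne_of_gt hp0)]
  · have hNpos : 0 < N := lt_of_le_of_ne hNnn (Ne.symm hN0)
    have hβnn : 0 ≤ β := by nlinarith [hβN, hNpos]
    -- raise to p
    have h1 : |A.mulVec x i| ^ p ≤ pnorm p (U i) ^ p * ((β * N) ^ p) := by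
      calc |A.mulVec x i| ^ p ≤ (pnorm p (U i) * (β * N)) ^ p :=
            Real.rpow_le_rpow (abs_nonneg _) hrow hp0.le
        _ = pnorm p (U i) ^ p * (β * N) ^ p :=
            Real.mul_rpow (pnorm_nonneg _ _) hβN
    have hkey : r * pnorm p (U i) ^ p ≤ α ^ p * pi := by
      by_cases hM0 : mpnorm p U = 0
      · have hU0 : pnorm p (U i) = 0 := by
          have : ∀ a b, U a b = 0 := by
            intro a b
            have hsum : (∑ a, ∑ b, |U a b| ^ p) = 0 := by
              have hnn : 0 ≤ ∑ a, ∑ b, |U a b| ^ p :=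
                Finset.sum_nonneg fun a _ => Finset.sum_nonneg fun b _ =>
                  Real.rpow_nonneg (abs_nonneg _) _
              by_contra hne
              exact hne ((Real.rpow_eq_zero hnn (by simp [ne_of_gt hp0])).mp hM0)
            have h1 := (Finset.sum_eq_zero_iff_of_nonneg
              (fun a _ => Finset.sum_nonneg fun b _ =>
                Real.rpow_nonneg (abs_nonneg _) p)).mp hsum a (Finset.mem_univ a)
            have h2 := (Finset.sum_eq_zero_iff_of_nonneg
              (fun b _ => Real.rpow_nonneg (abs_nonneg _) p)).mp h1 b (Finset.mem_univ b)
            have := (Real.rpow_eq_zero (abs_nonneg _) (ne_of_gt hp0)).mp h2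
            simpa using this
          unfold pnorm
          have : ∀ j, |U i j| ^ p = 0 := fun j => by
            rw [this i j, abs_zero, Real.zero_rpow (ne_of_gt hp0)]
          rw [Finset.sum_congr rfl fun j _ => this j]
          simp [Real.zero_rpow (ne_of_gt hp0), ne_of_gt hp0]
        rw [hU0, Real.zero_rpow (ne_of_gt hp0), mul_zero]
        positivity
      · have hMpos : 0 < mpnorm p U := lt_of_le_of_ne hmnn (Ne.symm hM0)
        have hMp : 0 < mpnorm p U ^ p := Real.rpow_pos_of_pos hMpos p
        have h2 : r * pnorm p (U i) ^ p ≤ pi * mpnorm p U ^ p := by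
          rw [div_le_iff₀ hMp] at hpi
          linarith
        have h3 : mpnorm p U ^ p ≤ α ^ p :=
          Real.rpow_le_rpow hmnn hα hp0.le
        calc r * pnorm p (U i) ^ p ≤ pi * mpnorm p U ^ p := h2
          _ ≤ pi * α ^ p := mul_le_mul_of_nonneg_left h3 hpi0.le
          _ = α ^ p * pi := mul_comm _ _
    -- assemble
    have hβNp : (β * N) ^ p = β ^ p * N ^ p := Real.mul_rpow hβnn hNnn
    have hαβ : (α * β) ^ p = α ^ p * β ^ p := Real.mul_rpow hαnn hβnn
    rw [div_le_div_iff₀ hpi0 hr, hαβ]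
    have hUnn : 0 ≤ pnorm p (U i) ^ p := Real.rpow_nonneg (pnorm_nonneg _ _) _
    have hβNpnn : 0 ≤ (β * N) ^ p := Real.rpow_nonneg hβN _
    calc |A.mulVec x i| ^ p * r ≤ pnorm p (U i) ^ p * ((β * N) ^ p) * r :=
          mul_le_mul_of_nonneg_right h1 hr.le
      _ = (r * pnorm p (U i) ^ p) * (β * N) ^ p := by ring
      _ ≤ (α ^ p * pi) * (β * N) ^ p := mul_le_mul_of_nonneg_right hkey hβNpnn
      _ = α ^ p * β ^ p * N ^ p * pi := by rw [hβNp]; ring
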